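/- For every integer C₀ ≥ 1 there exists an integer M > 0 such that for all z, z' ∈ J with ‖z − z'‖ ≤ C₀, the Hausdorff distance between the sets A(z) and A(z') (viewed as finite subsets of ℝ^m) is less than M. -/

import Mathlib

open scoped BigOperators RealInnerProductSpace
open Filter Topology

noncomputable section

/-- `Euc s` is the Euclidean space `ℝ^s`. -/
abbrev Euc (s : ℕ) := EuclideanSpace ℝ (Fin s)

/-- The additive semigroup `X₁ℕ + ⋯ + X_mℕ` generated by the vectors `X j`. -/
def sgOf {s : ℕ} {ι : Type*} [Fintype ι] (X : ι → Euc s) : Set (Euc s) :=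
  {z | ∃ u : ι → ℕ, ∑ j, (u j : ℝ) • X j = z}

/-- The lattice `X₁ℤ + ⋯ + X_mℤ` generated by the vectors `X j`. -/
def latOf {s : ℕ} {ι : Type*} [Fintype ι] (X : ι → Euc s) : Set (Euc s) :=
  {z | ∃ u : ι → ℤ, ∑ j, (u j : ℝ) • X j = z}

/-- The convex cone `X₁ℝ⁺ + ⋯ + X_mℝ⁺` generated by the vectors `X j`. -/
def coneOf {s : ℕ} {ι : Type*} [Fintype ι] (X : ι → Euc s) : Set (Euc s) :=
  {x | ∃ c : ι → ℝ, (∀ j, 0 ≤ c j) ∧ ∑ j, c j • X j = x}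

/-- The multiplicity of `z`: the number of finite words `i₁…i_n` with
`X_{i₁} + ⋯ + X_{i_n} = z`. -/
def mult {s : ℕ} {ι : Type*} [Fintype ι] (X : ι → Euc s) (z : Euc s) : ℕ :=
  Set.ncard {w : List ι | (w.map X).sum = z}

/-- The multiplicity extended to the cone: the minimum of `mult X z` over points
`z` of the semigroup nearest to `x`. -/
def multC {s : ℕ} {ι : Type*} [Fintype ι] (X : ι → Euc s) (x : Euc s) : ℕ :=
  sInf {n | ∃ z ∈ sgOf X, dist x z = Metric.infDist x (sgOf X) ∧ mult X z = n}

/-- All the vectors `X j` have integer coordinates. -/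
def IntegralVecs {s : ℕ} {ι : Type*} (X : ι → Euc s) : Prop :=
  ∀ j i, ∃ n : ℤ, X j i = (n : ℝ)

/-- The entropy `h(p) = -∑ p_j log p_j` of a probability vector. -/
def entropy {m : ℕ} (p : Fin m → ℝ) : ℝ := -∑ j, p j * Real.log (p j)

/-- The `p`-th iteration of `X`: all sums `X_{ω₁} + ⋯ + X_{ω_p}` over words `ω`. -/
def iter {s m : ℕ} (X : Fin m → Euc s) (p : ℕ) : (Fin p → Fin m) → Euc s :=
  fun ω => ∑ i, X (ω i)

/-- Dickson's lemma: finite basis of minimal elements. -/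
lemma dickson_basis {ι : Type*} [Finite ι] (S : Set (ι → ℕ)) :
    ∃ F : Set (ι → ℕ), F ⊆ S ∧ F.Finite ∧ ∀ x ∈ S, ∃ y ∈ F, y ≤ x := by
  haveI hwo : ∀ i : ι, IsWellOrder ((fun _ : ι => ℕ) i) (· < ·) := fun _ => inferInstance
  have hpwo : S.IsPWO := Set.isPWO_of_wellQuasiOrderedLE S
  set F : Set (ι → ℕ) := {x ∈ S | ∀ y ∈ S, y ≤ x → x ≤ y} with hF
  have hFS : F ⊆ S := fun x hx => hx.1
  have hanti : IsAntichain (· ≤ ·) F := by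
    intro a ha b hb hab hle
    exact hab (le_antisymm hle (hb.2 a ha.1 hle))
  refine ⟨F, hFS, hanti.finite_of_partiallyWellOrderedOn (hpwo.mono hFS), ?_⟩
  intro x hx
  have hwf : {y ∈ S | y ≤ x}.IsWF := hpwo.isWF.mono (fun y hy => hy.1)
  have hne : {y ∈ S | y ≤ x}.Nonempty := ⟨x, hx, le_rfl⟩
  refine ⟨hwf.min hne, ⟨(hwf.min_mem hne).1, ?_⟩, (hwf.min_mem hne).2⟩
  intro y hy hyx
  have hnlt : ¬ y < hwf.min hne :=
    hwf.not_lt_min hne ⟨hy, le_trans hyx (hwf.min_mem hne).2⟩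
  rcases hyx.lt_or_eq with h | h
  · exact absurd h hnlt
  · exact le_of_eq h.symm

def embR {m : ℕ} (u : Fin m → ℕ) : EuclideanSpace ℝ (Fin m) := WithLp.toLp 2 (fun j => (u j : ℝ))

@[simp] lemma embR_apply {m : ℕ} (u : Fin m → ℕ) (j : Fin m) : embR u j = (u j : ℝ) := rfl

/-- For a fixed difference `w`, any solution `u` of `Lu - Lu' = w` can be moved to a
solution of `L u'' = L u'` at bounded distance. -/
lemma key_w {s m : ℕ} (X : Fin m → Euc s) (w : Euc s) :
    ∃ B : ℕ, ∀ u u' : Fin m → ℕ,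
      (∑ j, (u j : ℝ) • X j) - (∑ j, (u' j : ℝ) • X j) = w →
      ∃ u'' : Fin m → ℕ,
        (∑ j, ((u'' j : ℝ)) • X j) = (∑ j, (u' j : ℝ) • X j) ∧
        dist (embR u) (embR u'') ≤ (B : ℝ) := by
  classical
  set S : Set (Fin m ⊕ Fin m → ℕ) :=
    {x | (∑ j, (x (Sum.inl j) : ℝ) • X j) - (∑ j, (x (Sum.inr j) : ℝ) • X j) = w} with hS
  obtain ⟨F, hFS, hFfin, hbasis⟩ := dickson_basis S
  set D : (Fin m ⊕ Fin m → ℕ) → ℕ := fun y =>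
    ⌈dist (embR (fun j => y (Sum.inl j))) (embR (fun j => y (Sum.inr j)))⌉₊ with hD
  refine ⟨hFfin.toFinset.sup D, ?_⟩
  intro u u' huu
  have hx : Sum.elim u u' ∈ S := huu
  obtain ⟨y, hyF, hyle⟩ := hbasis _ hx
  have hvu : ∀ j, y (Sum.inl j) ≤ u j := fun j => hyle (Sum.inl j)
  have hyS : (∑ j, (y (Sum.inl j) : ℝ) • X j) - (∑ j, (y (Sum.inr j) : ℝ) • X j) = w :=
    hFS hyF
  refine ⟨fun j => u j - y (Sum.inl j) + y (Sum.inr j), ?_, ?_⟩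
  · have hcast : ∀ j, ((u j - y (Sum.inl j) + y (Sum.inr j) : ℕ) : ℝ)
        = (u j : ℝ) - (y (Sum.inl j) : ℝ) + (y (Sum.inr j) : ℝ) := by
      intro j
      push_cast [Nat.cast_sub (hvu j)]
      ring
    have h1 : (∑ j, ((u j - y (Sum.inl j) + y (Sum.inr j) : ℕ) : ℝ) • X j)
        = (∑ j, (u j : ℝ) • X j) - (∑ j, (y (Sum.inl j) : ℝ) • X j)
          + (∑ j, (y (Sum.inr j) : ℝ) • X j) := by
      rw [← Finset.sum_sub_distrib, ← Finset.sum_add_distrib]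
      refine Finset.sum_congr rfl fun j _ => ?_
      rw [hcast j, add_smul, sub_smul]
    rw [h1]
    have h2 : (∑ j, (u j : ℝ) • X j) - (∑ j, (y (Sum.inl j) : ℝ) • X j)
          + (∑ j, (y (Sum.inr j) : ℝ) • X j) - (∑ j, (u' j : ℝ) • X j)
        = ((∑ j, (u j : ℝ) • X j) - (∑ j, (u' j : ℝ) • X j))
          - ((∑ j, (y (Sum.inl j) : ℝ) • X j) - (∑ j, (y (Sum.inr j) : ℝ) • X j)) := by
      abel
    have h3 : (∑ j, (u j : ℝ) • X j) - (∑ j, (y (Sum.inl j) : ℝ) • X j)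
          + (∑ j, (y (Sum.inr j) : ℝ) • X j) - (∑ j, (u' j : ℝ) • X j) = 0 := by
      rw [h2, huu, hyS, sub_self]
    exact sub_eq_zero.mp h3
  · have hed : embR u - embR (fun j => u j - y (Sum.inl j) + y (Sum.inr j))
        = embR (fun j => y (Sum.inl j)) - embR (fun j => y (Sum.inr j)) := by
      ext j
      show (u j : ℝ) - ((u j - y (Sum.inl j) + y (Sum.inr j) : ℕ) : ℝ)
          = (y (Sum.inl j) : ℝ) - (y (Sum.inr j) : ℝ)
      push_cast [Nat.cast_sub (hvu j)]
      ring
    rw [dist_eq_norm, hed, ← dist_eq_norm]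
    have hle : dist (embR (fun j => y (Sum.inl j))) (embR (fun j => y (Sum.inr j)))
        ≤ (D y : ℝ) := by
      rw [hD]
      exact Nat.le_ceil _
    refine hle.trans ?_
    exact Nat.cast_le.mpr (Finset.le_sup (f := D) (hFfin.mem_toFinset.mpr hyF))

lemma euc_sum_apply {k s : ℕ} (f : Fin k → Euc s) (i : Fin s) :
    (∑ x, f x) i = ∑ x, f x i := by
  induction (Finset.univ : Finset (Fin k)) using Finset.induction_on with
  | empty => simp
  | insert _ _ h ih => rw [Finset.sum_insert h, Finset.sum_insert h, ← ih]; rfl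

lemma sg_int {s m : ℕ} {X : Fin m → Euc s} (hint : IntegralVecs X) {z : Euc s}
    (hz : z ∈ sgOf X) (i : Fin s) : ∃ n : ℤ, z i = (n : ℝ) := by
  classical
  obtain ⟨u, hu⟩ := hz
  choose N hN using hint
  refine ⟨∑ j, (u j : ℤ) * N j i, ?_⟩
  rw [← hu]
  rw [euc_sum_apply]
  push_cast
  refine Finset.sum_congr rfl fun j _ => ?_
  show (u j : ℝ) * X j i = (u j : ℝ) * (N j i : ℝ)
  rw [hN j i]

lemma coord_abs_le_norm {s : ℕ} (w : Euc s) (i : Fin s) : |w i| ≤ ‖w‖ := by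
  rw [EuclideanSpace.norm_eq]
  have h1 : |w i| = Real.sqrt (‖w i‖ ^ 2) := by
    rw [Real.sqrt_sq_eq_abs]
    simp [Real.norm_eq_abs, abs_abs]
  rw [h1]
  apply Real.sqrt_le_sqrt
  exact Finset.single_le_sum (f := fun i => ‖w i‖ ^ 2)
    (fun j _ => sq_nonneg _) (Finset.mem_univ i)

lemma W_finite (s : ℕ) (C₀ : ℕ) :
    Set.Finite {w : Euc s | (∀ i, ∃ n : ℤ, w i = (n : ℝ)) ∧ ‖w‖ ≤ (C₀ : ℝ)} := by
  classical
  have hsub : {w : Euc s | (∀ i, ∃ n : ℤ, w i = (n : ℝ)) ∧ ‖w‖ ≤ (C₀ : ℝ)}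
      ⊆ (fun n : Fin s → ℤ => (WithLp.toLp 2 (fun i => (n i : ℝ)) : Euc s)) ''
          (Set.pi Set.univ fun _ => Set.Icc (-(C₀ : ℤ)) (C₀ : ℤ)) := by
    rintro w ⟨hw1, hw2⟩
    choose n hn using hw1
    refine ⟨n, fun i _ => ?_, ?_⟩
    · have h1 : |w i| ≤ (C₀ : ℝ) := le_trans (coord_abs_le_norm w i) hw2
      rw [hn i] at h1
      have h2 : |n i| ≤ (C₀ : ℤ) := by exact_mod_cast (by rwa [← Int.cast_abs] at h1 :
        ((|n i| : ℤ) : ℝ) ≤ (C₀ : ℝ))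
      exact abs_le.mp h2
    · ext i
      exact (hn i).symm
  exact ((Set.Finite.pi fun _ => Set.finite_Icc _ _).image _).subset hsub

/-- For every integer `C₀ ≥ 1` there is an integer `M > 0` such that the Hausdorff
distance between `A(z)` and `A(z')` (as subsets of `ℝ^m`) is less than `M`,
whenever `z, z' ∈ J` and `‖z - z'‖ ≤ C₀`. -/
theorem stmt4 {s m : ℕ} (hs : 1 ≤ s) (hm : 2 ≤ m) (X : Fin m → Euc s)
    (hint : IntegralVecs X)
    (hspan : Submodule.span ℝ (Set.range X) = ⊤)
    (α : Euc s) (hα : ∀ j, 0 < ⟪X j, α⟫)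
    (C₀ : ℕ) (hC₀ : 1 ≤ C₀) :
    ∃ M : ℕ, 0 < M ∧ ∀ z ∈ sgOf X, ∀ z' ∈ sgOf X, ‖z - z'‖ ≤ (C₀ : ℝ) →
      Metric.hausdorffDist
        {v : EuclideanSpace ℝ (Fin m) |
          ∃ u : Fin m → ℕ, (∀ j, v j = (u j : ℝ)) ∧ ∑ j, (u j : ℝ) • X j = z}
        {v : EuclideanSpace ℝ (Fin m) |
          ∃ u : Fin m → ℕ, (∀ j, v j = (u j : ℝ)) ∧ ∑ j, (u j : ℝ) • X j = z'}
        < (M : ℝ) := by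
  classical
  choose B hB using fun w => key_w X w
  have hWfin := W_finite s C₀
  set Ms := hWfin.toFinset.sup B with hMs
  refine ⟨Ms + 1, Nat.succ_pos _, ?_⟩
  intro z hz z' hz' hdist
  have hmemW : ∀ {a b : Euc s}, a ∈ sgOf X → b ∈ sgOf X → ‖a - b‖ ≤ (C₀ : ℝ) →
      (a - b) ∈ {w : Euc s | (∀ i, ∃ n : ℤ, w i = (n : ℝ)) ∧ ‖w‖ ≤ (C₀ : ℝ)} := by
    intro a b ha hb hab
    refine ⟨fun i => ?_, hab⟩
    obtain ⟨p, hp⟩ := sg_int hint ha i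
    obtain ⟨q, hq⟩ := sg_int hint hb i
    refine ⟨p - q, ?_⟩
    show a i - b i = ((p - q : ℤ) : ℝ)
    rw [hp, hq]
    push_cast
    ring
  have h1 := hmemW hz hz' hdist
  have h2 := hmemW hz' hz (by rwa [norm_sub_rev])
  have key : ∀ a b : Euc s, a ∈ sgOf X → b ∈ sgOf X →
      (a - b) ∈ {w : Euc s | (∀ i, ∃ n : ℤ, w i = (n : ℝ)) ∧ ‖w‖ ≤ (C₀ : ℝ)} →
      ∀ x ∈ {v : EuclideanSpace ℝ (Fin m) |
          ∃ u : Fin m → ℕ, (∀ j, v j = (u j : ℝ)) ∧ ∑ j, (u j : ℝ) • X j = a},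
        ∃ yv ∈ {v : EuclideanSpace ℝ (Fin m) |
          ∃ u : Fin m → ℕ, (∀ j, v j = (u j : ℝ)) ∧ ∑ j, (u j : ℝ) • X j = b},
          dist x yv ≤ (Ms : ℝ) := by
    rintro a b ha hb hw x ⟨u, hxu, hua⟩
    obtain ⟨u₀, hu₀⟩ := hb
    have heq : (∑ j, (u j : ℝ) • X j) - (∑ j, (u₀ j : ℝ) • X j) = a - b := by
      rw [hua, hu₀]
    obtain ⟨u'', hL, hd⟩ := hB (a - b) u u₀ heq
    refine ⟨embR u'', ⟨u'', fun j => rfl, by rw [hL, hu₀]⟩, ?_⟩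
    have hx : x = embR u := by ext j; exact hxu j
    rw [hx]
    refine hd.trans ?_
    exact Nat.cast_le.mpr (Finset.le_sup (f := B) (hWfin.mem_toFinset.mpr hw))
  have hle := Metric.hausdorffDist_le_of_mem_dist (Nat.cast_nonneg Ms)
    (key z z' hz hz' h1) (key z' z hz' hz h2)
  refine lt_of_le_of_lt hle ?_
  exact_mod_cast Nat.lt_succ_self Ms
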